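/- Let X be a topological space, A a countable family of linear conditions: for each s ∈ ℂ^n let Γ(s)_N ⊆ W_N be the solution space in a finite-dimensional space W_N of a finite system of homogeneous linear equations with coefficients polynomial in s, with W_N ⊆ W_{N+1} and Γ(s)_N ⊆ Γ(s)_{N+1}, and Γ(s) = ⋃_N Γ(s)_N with dim Γ(s) ≤ D for all s. Then for each d, the set {s : dim Γ(s) ≥ d} is a countable union of Zariski closed subsets of ℂ^n, and there exists a maximal d₀ with {s : dim Γ(s) ≥ d₀} = ℂ^n; moreover there exists N such that dim Γ(s)_N ≥ d₀ for all s. -/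

import Mathlib

open Matrix

section Aux

lemma submatrix_eq_mul {m k a b : ℕ} (M : Matrix (Fin m) (Fin k) ℂ)
    (f : Fin a → Fin m) (g : Fin b → Fin k) :
    M.submatrix f g =
      ((1 : Matrix (Fin m) (Fin m) ℂ).submatrix f id) * M *
        ((1 : Matrix (Fin k) (Fin k) ℂ).submatrix id g) := by
  ext i j
  simp [Matrix.mul_apply, Matrix.one_apply, Finset.sum_ite_eq, Finset.sum_ite_eq']

lemma rank_submatrix_le' {m k a b : ℕ} (M : Matrix (Fin m) (Fin k) ℂ)
    (f : Fin a → Fin m) (g : Fin b → Fin k) :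
    (M.submatrix f g).rank ≤ M.rank := by
  rw [submatrix_eq_mul]
  exact le_trans (Matrix.rank_mul_le _ _) (le_trans inf_le_left
    (le_trans (Matrix.rank_mul_le _ _) inf_le_right))

lemma det_submatrix_eq_zero {m k r : ℕ} (M : Matrix (Fin m) (Fin k) ℂ) (h : M.rank < r)
    (f : Fin r → Fin m) (g : Fin r → Fin k) : (M.submatrix f g).det = 0 := by
  by_contra hd
  have hu : IsUnit (M.submatrix f g) :=
    (Matrix.isUnit_iff_isUnit_det _).2 (isUnit_iff_ne_zero.2 hd)
  have := Matrix.rank_of_isUnit _ hu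
  have h2 := rank_submatrix_le' M f g
  rw [this] at h2
  simp at h2
  omega

lemma exists_linind_comp {V : Type*} [AddCommGroup V] [Module ℂ V] {κ : Type*} [Fintype κ]
    (v : κ → V) (r : ℕ) (h : r ≤ Module.finrank ℂ (Submodule.span ℂ (Set.range v))) :
    ∃ g : Fin r → κ, LinearIndependent ℂ (v ∘ g) := by
  obtain ⟨b, hbsub, hbspan, hbind⟩ := exists_linearIndependent ℂ (Set.range v)
  have hbfin : b.Finite := (Set.finite_range v).subset hbsub
  haveI := hbfin.fintype
  have hcard : Module.finrank ℂ (Submodule.span ℂ b) = Fintype.card b := by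
    rw [finrank_span_set_eq_card hbind, Set.toFinset_card]
  rw [← hbspan, hcard] at h
  obtain ⟨e⟩ := Function.Embedding.nonempty_iff_card_le.2 (by simpa using h : Fintype.card (Fin r) ≤ Fintype.card b)
  have hind : LinearIndependent ℂ (fun j : Fin r => ((e j : b) : V)) :=
    hbind.comp e e.injective
  have hmem : ∀ j : Fin r, ((e j : b) : V) ∈ Set.range v := fun j => hbsub (e j).2
  choose g hg using hmem
  refine ⟨g, ?_⟩
  have : v ∘ g = fun j : Fin r => ((e j : b) : V) := funext fun j => hg j
  rw [this]; exact hind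

lemma exists_det_ne_zero {m k r : ℕ} (M : Matrix (Fin m) (Fin k) ℂ) (h : r ≤ M.rank) :
    ∃ (f : Fin r → Fin m) (g : Fin r → Fin k), (M.submatrix f g).det ≠ 0 := by
  rw [Matrix.rank_eq_finrank_span_cols] at h
  obtain ⟨g, hg⟩ := exists_linind_comp (Mᵀ : Fin k → Fin m → ℂ) r h
  set B : Matrix (Fin m) (Fin r) ℂ := M.submatrix id g with hB
  have hBT : Bᵀ = Mᵀ ∘ g := by ext j i; rfl
  have hrankB : B.rank = r := by
    rw [Matrix.rank_eq_finrank_span_cols, Matrix.col, hBT, finrank_span_eq_card hg, Fintype.card_fin]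
  have hrankBT : r ≤ Bᵀ.rank := by rw [Matrix.rank_transpose, hrankB]
  rw [Matrix.rank_eq_finrank_span_cols, col_transpose] at hrankBT
  obtain ⟨f, hf⟩ := exists_linind_comp (B : Fin m → Fin r → ℂ) r hrankBT
  refine ⟨f, g, ?_⟩
  have hC : M.submatrix f g = Matrix.of (B ∘ f) := by ext i j; rfl
  have hu : IsUnit (M.submatrix f g) := by
    rw [hC]
    exact Matrix.linearIndependent_rows_iff_isUnit.1 hf
  exact ((Matrix.isUnit_iff_isUnit_det _).1 hu).ne_zero

lemma rank_le_iff_minors {m k r : ℕ} (M : Matrix (Fin m) (Fin k) ℂ) :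
    M.rank ≤ r ↔
      ∀ (f : Fin (r + 1) → Fin m) (g : Fin (r + 1) → Fin k), (M.submatrix f g).det = 0 := by
  constructor
  · intro h f g
    exact det_submatrix_eq_zero M (by omega) f g
  · intro h
    by_contra hlt
    obtain ⟨f, g, hd⟩ := exists_det_ne_zero M (r := r + 1) (by omega)
    exact hd (h f g)

lemma exists_forall_eval_ne_zero :
    ∀ (n : ℕ) (F : ℕ → MvPolynomial (Fin n) ℂ), (∀ i, F i ≠ 0) →
      ∃ s : Fin n → ℂ, ∀ i, MvPolynomial.eval s (F i) ≠ 0 := by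
  intro n
  induction n with
  | zero =>
    intro F hF
    refine ⟨finZeroElim, fun i => ?_⟩
    intro h0
    apply hF i
    apply MvPolynomial.funext
    intro x
    rw [Subsingleton.elim x finZeroElim, h0, map_zero]
  | succ n ih =>
    intro F hF
    set q : ℕ → Polynomial (MvPolynomial (Fin n) ℂ) :=
      fun i => MvPolynomial.finSuccEquiv ℂ n (F i) with hq
    have hqne : ∀ i, q i ≠ 0 := by
      intro i h0
      exact hF i ((map_eq_zero_iff _ (MvPolynomial.finSuccEquiv ℂ n).injective).1 h0)
    have hlc : ∀ i, (q i).leadingCoeff ≠ 0 := fun i => Polynomial.leadingCoeff_ne_zero.2 (hqne i)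
    obtain ⟨a, ha⟩ := ih (fun i => (q i).leadingCoeff) hlc
    set r : ℕ → Polynomial ℂ := fun i => (q i).map (MvPolynomial.eval a) with hr
    have hrne : ∀ i, r i ≠ 0 := by
      intro i h0
      apply ha i
      have : (r i).coeff (q i).natDegree = MvPolynomial.eval a ((q i).leadingCoeff) := by
        rw [hr, Polynomial.leadingCoeff]; exact Polynomial.coeff_map _ _
      rw [← this, h0]; simp
    have hcount : (⋃ i : ℕ, {x : ℂ | (r i).IsRoot x}).Countable :=
      Set.countable_iUnion fun i => ((r i).finite_setOf_isRoot (hrne i)).countable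
    have : ¬ (Set.univ : Set ℂ) ⊆ ⋃ i : ℕ, {x : ℂ | (r i).IsRoot x} := by
      intro hsub
      exact not_countable_complex (hcount.mono hsub)
    obtain ⟨t, -, ht⟩ := Set.not_subset.1 this
    refine ⟨Fin.cons t a, fun i => ?_⟩
    rw [MvPolynomial.eval_eq_eval_mv_eval']
    intro h0
    exact ht (Set.mem_iUnion.2 ⟨i, h0⟩)

lemma ker_dim_locus {n mN kN : ℕ} (d : ℕ) (A : (Fin n → ℂ) → Matrix (Fin mN) (Fin kN) ℂ)
    (P : Fin mN → Fin kN → MvPolynomial (Fin n) ℂ)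
    (hpoly : ∀ s i j, A s i j = MvPolynomial.eval s (P i j)) :
    ∃ T : Set (MvPolynomial (Fin n) ℂ),
      {s | d ≤ Module.finrank ℂ (LinearMap.ker (A s).mulVecLin)} =
        {s | ∀ p ∈ T, MvPolynomial.eval s p = 0} := by
  have hrank : ∀ s, (A s).rank + Module.finrank ℂ (LinearMap.ker (A s).mulVecLin) = kN := by
    intro s
    have := LinearMap.finrank_range_add_finrank_ker (A s).mulVecLin
    rwa [Module.finrank_pi, Fintype.card_fin] at this
  by_cases hd : d ≤ kN
  · refine ⟨Set.range (fun fg : (Fin (kN - d + 1) → Fin mN) × (Fin (kN - d + 1) → Fin kN) =>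
      ((Matrix.of P).submatrix fg.1 fg.2).det), ?_⟩
    ext s
    simp only [Set.mem_setOf_eq, Set.forall_mem_range, Prod.forall]
    have key : ∀ (f : Fin (kN - d + 1) → Fin mN) (g : Fin (kN - d + 1) → Fin kN),
        MvPolynomial.eval s (((Matrix.of P).submatrix f g).det) = ((A s).submatrix f g).det := by
      intro f g
      rw [RingHom.map_det]
      congr 1
      ext i j
      simp [hpoly]
    constructor
    · intro h f g
      rw [key]
      exact (rank_le_iff_minors (A s)).1 (by have := hrank s; omega) f g
    · intro h
      have : (A s).rank ≤ kN - d := (rank_le_iff_minors (A s)).2 (fun f g => by rw [← key]; exact h f g)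
      have := hrank s; omega
  · refine ⟨{1}, ?_⟩
    ext s
    simp only [Set.mem_setOf_eq, Set.mem_singleton_iff, forall_eq, _root_.map_one]
    constructor
    · intro h; have := hrank s; omega
    · intro h; exact absurd h one_ne_zero

end Aux

/-- jumping locus setup: `Γ(s)_N` is the kernel of a matrix `A N s`
with entries polynomial in `s`, the dimensions `dimΓ s N` are nondecreasing in `N`
(since `Γ(s)_N ⊆ Γ(s)_{N+1}`) and uniformly bounded by `D`. Then for each `d` the
set `{s : dim Γ(s) ≥ d}` is a countable union of Zariski closed subsets, there is a
maximal `d₀` with `{s : dim Γ(s) ≥ d₀} = ℂⁿ`, and there is `N` with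
`dim Γ(s)_N ≥ d₀` for all `s`. -/
theorem jumping_locus_countable_union_and_generic_dimension
    (n : ℕ) (k m : ℕ → ℕ)
    (A : ∀ N : ℕ, (Fin n → ℂ) → Matrix (Fin (m N)) (Fin (k N)) ℂ)
    (P : ∀ N : ℕ, Fin (m N) → Fin (k N) → MvPolynomial (Fin n) ℂ)
    (hpoly : ∀ N s i j, A N s i j = MvPolynomial.eval s (P N i j))
    (dimΓ : (Fin n → ℂ) → ℕ → ℕ)
    (hdim : ∀ s N, dimΓ s N = Module.finrank ℂ (LinearMap.ker (A N s).mulVecLin))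
    (hmono : ∀ s, Monotone (dimΓ s))
    (D : ℕ) (hbd : ∀ s N, dimΓ s N ≤ D) :
    (∀ d : ℕ, ∃ Z : ℕ → Set (Fin n → ℂ),
      (∀ j, ∃ T : Set (MvPolynomial (Fin n) ℂ),
        Z j = {s | ∀ p ∈ T, MvPolynomial.eval s p = 0}) ∧
      {s : Fin n → ℂ | d ≤ ⨆ N, dimΓ s N} = ⋃ j, Z j) ∧
    ∃ d₀ : ℕ,
      {s : Fin n → ℂ | d₀ ≤ ⨆ N, dimΓ s N} = Set.univ ∧
      (∀ d : ℕ, {s : Fin n → ℂ | d ≤ ⨆ N, dimΓ s N} = Set.univ → d ≤ d₀) ∧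
      ∃ N : ℕ, ∀ s : Fin n → ℂ, d₀ ≤ dimΓ s N := by
  classical
  have hbdd : ∀ s, BddAbove (Set.range (dimΓ s)) := by
    intro s
    exact ⟨D, by rintro _ ⟨N, rfl⟩; exact hbd s N⟩
  have hsup_iff : ∀ s d, d ≤ (⨆ N, dimΓ s N) ↔ ∃ N, d ≤ dimΓ s N := by
    intro s d
    constructor
    · intro h
      have hmem : sSup (Set.range (dimΓ s)) ∈ Set.range (dimΓ s) :=
        Nat.sSup_mem ⟨dimΓ s 0, ⟨0, rfl⟩⟩ (hbdd s)
      obtain ⟨N, hN⟩ := hmem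
      exact ⟨N, by rw [hN]; exact h⟩
    · rintro ⟨N, hN⟩
      exact le_trans hN (le_ciSup (hbdd s) N)
  -- the per-level closed sets
  have hlocus : ∀ (d N : ℕ), ∃ T : Set (MvPolynomial (Fin n) ℂ),
      {s | d ≤ dimΓ s N} = {s | ∀ p ∈ T, MvPolynomial.eval s p = 0} := by
    intro d N
    obtain ⟨T, hT⟩ := ker_dim_locus d (A N) (P N) (fun s i j => hpoly N s i j)
    refine ⟨T, ?_⟩
    rw [← hT]
    ext s
    simp only [Set.mem_setOf_eq, hdim s N]
  constructor
  · intro d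
    refine ⟨fun N => {s | d ≤ dimΓ s N}, fun N => hlocus d N, ?_⟩
    ext s
    simp only [Set.mem_setOf_eq, Set.mem_iUnion, hsup_iff s d]
  · set pred : ℕ → Prop := fun d => {s : Fin n → ℂ | d ≤ ⨆ N, dimΓ s N} = Set.univ with hpred
    have hp0 : pred 0 := Set.eq_univ_of_forall (fun s => Nat.zero_le _)
    have hle : ∀ d, pred d → d ≤ D := by
      intro d h
      have hmem : (fun _ => 0 : Fin n → ℂ) ∈ {s : Fin n → ℂ | d ≤ ⨆ N, dimΓ s N} := by
        rw [h]; trivial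
      exact le_trans hmem (ciSup_le (fun N => hbd _ N))
    set d₀ := Nat.findGreatest pred D with hd₀
    have hspec : pred d₀ := Nat.findGreatest_spec (Nat.zero_le D) hp0
    refine ⟨d₀, hspec, fun d hd => Nat.le_findGreatest (hle d hd) hd, ?_⟩
    -- uniform N
    by_contra hex
    push_neg at hex
    have hbad : ∀ N, ∃ s, ¬ (d₀ ≤ dimΓ s N) := by
      intro N
      obtain ⟨s, hs⟩ := hex N
      exact ⟨s, by omega⟩
    choose T hT using hlocus d₀
    have hpick : ∀ N, ∃ p ∈ T N, p ≠ 0 ∧ ∃ s₀, MvPolynomial.eval s₀ p ≠ 0 := by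
      intro N
      obtain ⟨s₀, hs₀⟩ := hbad N
      have : s₀ ∉ {s | ∀ p ∈ T N, MvPolynomial.eval s p = 0} := by
        rw [← hT N]; exact hs₀
      simp only [Set.mem_setOf_eq, not_forall] at this
      obtain ⟨p, hp, hpe⟩ := this
      refine ⟨p, hp, ?_, ⟨s₀, hpe⟩⟩
      rintro rfl
      exact hpe (map_zero _)
    choose F hFmem hFne hFev using hpick
    obtain ⟨s, hs⟩ := exists_forall_eval_ne_zero n F hFne
    have : s ∈ {s : Fin n → ℂ | d₀ ≤ ⨆ N, dimΓ s N} := by rw [hspec]; trivial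
    obtain ⟨N, hN⟩ := (hsup_iff s d₀).1 this
    have hsin : s ∈ {s | ∀ p ∈ T N, MvPolynomial.eval s p = 0} := by
      rw [← hT N]; exact hN
    exact hs N (hsin (F N) (hFmem N))
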